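/- Let G be a subgroup of O⁺(ℤ), let C ⊆ V be a set whose closure is G-invariant (g(closure(C)) = closure(C) for all g ∈ G), and let y ∈ C⁺. Define D = {x ∈ closure(C) : B(x,y) ≤ B(x,g(y)) for all g ∈ G}. Then for every g ∈ G, if the topological interior of D meets g(interior of D), then g(y) = y. In particular, if y has trivial stabilizer in G, the interiors of D and g(D) are disjoint for every g ≠ id. -/
import Mathlib


/-- The Minkowski bilinear form of signature `(1,n)` on `ℝ^{n+1}`:
`B x y = x₀ y₀ - ∑_{i=1}^n xᵢ yᵢ`. -/
def B (n : ℕ) (x y : Fin (n + 1) → ℝ) : ℝ :=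
  x 0 * y 0 - ∑ i : Fin n, x i.succ * y i.succ

/-- The integral lattice `ℤ^{n+1} ⊆ ℝ^{n+1}`. -/
def intLattice (n : ℕ) : Set (Fin (n + 1) → ℝ) := {x | ∀ i, ∃ m : ℤ, x i = (m : ℝ)}

/-- The open positive cone `C⁺ = {x : B(x,x) > 0, x₀ > 0}`. -/
def posCone (n : ℕ) : Set (Fin (n + 1) → ℝ) := {x | 0 < B n x x ∧ 0 < x 0}

/-- Membership in `O⁺(ℤ)`: a linear automorphism of `V` preserving the Minkowski form,
mapping the lattice `ℤ^{n+1}` onto itself and the open positive cone onto itself. -/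
def InOplusZ (n : ℕ) (g : (Fin (n + 1) → ℝ) ≃ₗ[ℝ] (Fin (n + 1) → ℝ)) : Prop :=
  (∀ x y, B n (g x) (g y) = B n x y) ∧
  g '' intLattice n = intLattice n ∧
  g '' posCone n = posCone n

lemma B_add_left (n : ℕ) (x x' y : Fin (n + 1) → ℝ) :
    B n (x + x') y = B n x y + B n x' y := by
  simp [B, add_mul, Finset.sum_add_distrib]; ring

lemma B_smul_left (n : ℕ) (c : ℝ) (x y : Fin (n + 1) → ℝ) :
    B n (c • x) y = c * B n x y := by
  simp [B, mul_sub, Finset.mul_sum, mul_assoc]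

lemma B_sub_right (n : ℕ) (x y y' : Fin (n + 1) → ℝ) :
    B n x (y - y') = B n x y - B n x y' := by
  simp [B, mul_sub, Finset.sum_sub_distrib]; ring

lemma B_single_zero (n : ℕ) (w : Fin (n + 1) → ℝ) :
    B n (Pi.single (0 : Fin (n + 1)) (1 : ℝ)) w = w 0 := by
  simp [B, Pi.single_apply, Fin.succ_ne_zero]

lemma B_single_succ (n : ℕ) (j : Fin n) (w : Fin (n + 1) → ℝ) :
    B n (Pi.single (j.succ) (1 : ℝ)) w = - w j.succ := by
  simp [B, Pi.single_apply, Fin.succ_ne_zero, Fin.succ_inj]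

/-- If the interior of the Dirichlet domain `D` meets `g` applied to its own interior,
then `g` fixes the center `y`; in particular, if `y` has trivial stabilizer, the
interiors of `D` and `g(D)` are disjoint for every `g ≠ 1`. -/
theorem dirichlet_interiors_disjoint (n : ℕ) (hn : 1 ≤ n)
    (G : Subgroup ((Fin (n + 1) → ℝ) ≃ₗ[ℝ] (Fin (n + 1) → ℝ)))
    (hG : ∀ g ∈ G, InOplusZ n g)
    (C : Set (Fin (n + 1) → ℝ))
    (hCinv : ∀ g ∈ G, (g : (Fin (n + 1) → ℝ) ≃ₗ[ℝ] _) '' closure C = closure C)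
    (y : Fin (n + 1) → ℝ) (hy : y ∈ posCone n)
    (D : Set (Fin (n + 1) → ℝ))
    (hD : D = {x ∈ closure C | ∀ g ∈ G, B n x y ≤ B n x (g y)}) :
    (∀ g ∈ G, (interior D ∩ (g : (Fin (n + 1) → ℝ) ≃ₗ[ℝ] _) '' interior D).Nonempty →
      (g : (Fin (n + 1) → ℝ) ≃ₗ[ℝ] _) y = y) ∧
    ((∀ g ∈ G, (g : (Fin (n + 1) → ℝ) ≃ₗ[ℝ] _) y = y → g = 1) →
      ∀ g ∈ G, g ≠ 1 →
        Disjoint (interior D) (interior ((g : (Fin (n + 1) → ℝ) ≃ₗ[ℝ] _) '' D))) := by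
  have part1 : ∀ g ∈ G,
      (interior D ∩ (g : (Fin (n + 1) → ℝ) ≃ₗ[ℝ] _) '' interior D).Nonempty → g y = y := by
    intro g hg ⟨x₀, hx₀⟩
    have hinv : g⁻¹ ∈ G := G.inv_mem hg
    have hBg := (hG g hg).1
    set w : Fin (n + 1) → ℝ := y - g y with hw
    set U : Set (Fin (n + 1) → ℝ) := interior D ∩ g '' interior D with hU
    -- the key vanishing on U
    have key : ∀ x ∈ U, B n x w = 0 := by
      rintro x ⟨hxD, z, hzD, rfl⟩
      have hx1 : g z ∈ D := interior_subset hxD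
      have hz1 : z ∈ D := interior_subset hzD
      rw [hD] at hx1 hz1
      have h1 : B n (g z) y ≤ B n (g z) (g y) := hx1.2 g hg
      have h2 : B n z y ≤ B n z (g⁻¹ y) := hz1.2 g⁻¹ hinv
      have e1 : B n (g z) (g y) = B n z y := hBg z y
      have e2 : B n z (g⁻¹ y) = B n (g z) y := by
        have h3 := hBg z (g⁻¹ y)
        have h4 : g (g⁻¹ y) = y := g.apply_symm_apply y
        rw [h4] at h3
        exact h3.symm
      rw [B_sub_right]
      linarith
    -- U is open
    have hcont : Continuous g := g.toContinuousLinearEquiv.continuous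
    have hopenmap : IsOpenMap g := by
      have := g.toContinuousLinearEquiv.toHomeomorph.isOpenMap
      simpa [LinearEquiv.coe_toContinuousLinearEquiv'] using this
    have hUopen : IsOpen U := isOpen_interior.inter (hopenmap _ isOpen_interior)
    obtain ⟨ε, hε, hball⟩ := Metric.isOpen_iff.mp hUopen x₀ hx₀
    -- each coordinate direction vanishes
    have comp : ∀ j : Fin (n + 1), B n (Pi.single j (1 : ℝ)) w = 0 := by
      intro j
      have hx₀w : B n x₀ w = 0 := key x₀ hx₀
      have hmem : x₀ + (ε / 2) • (Pi.single j 1 : Fin (n + 1) → ℝ) ∈ U := by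
        apply hball
        have : dist (x₀ + (ε / 2) • (Pi.single j 1 : Fin (n + 1) → ℝ)) x₀
            = ‖(ε / 2) • (Pi.single j 1 : Fin (n + 1) → ℝ)‖ := by
          simp [dist_eq_norm]
        rw [Metric.mem_ball, this, norm_smul, Pi.norm_single]
        simp only [norm_one, mul_one, Real.norm_eq_abs]
        rw [abs_of_pos (by linarith)]
        linarith
      have := key _ hmem
      rw [B_add_left, B_smul_left, hx₀w] at this
      have hε2 : (ε / 2 : ℝ) ≠ 0 := by positivity
      have := (mul_eq_zero.mp (by linarith : (ε / 2) * B n (Pi.single j 1) w = 0)).resolve_left hε2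
      exact this
    have hw0 : w = 0 := by
      funext j
      induction j using Fin.cases with
      | zero =>
        have := comp 0
        rw [B_single_zero] at this
        simpa using this
      | succ i =>
        have := comp i.succ
        rw [B_single_succ] at this
        simpa using (neg_eq_zero.mp this)
    have : y - g y = 0 := hw0
    have := sub_eq_zero.mp this
    exact this.symm
  refine ⟨part1, ?_⟩
  intro htriv g hg hne
  rw [Set.disjoint_left]
  intro x hx1 hx2
  apply hne
  apply htriv g hg
  apply part1 g hg
  refine ⟨x, hx1, ?_⟩
  have hopenint : g '' interior D = interior (g '' D) := by
    have := g.toContinuousLinearEquiv.toHomeomorph.image_interior D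
    simpa [LinearEquiv.coe_toContinuousLinearEquiv'] using this
  rw [hopenint]
  exact hx2
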